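/- Let α > 1 and x_min > 0, and let X_1, X_2, … be i.i.d. random variables distributed according to the power-law distribution with exponent α and threshold x_min. Let α̂_n = 1 + n·(Σ_{i=1}^n ln(X_i/x_min))^(−1). Then α̂_n − α = O_p(1/√n), i.e., the sequence √n·(α̂_n − α) is bounded in probability. -/

import Mathlib

open MeasureTheory ProbabilityTheory Real Filter Finset

/-- The power-law probability measure with exponent `α` and threshold `xmin`:
the measure on `[xmin, ∞)` with density `((α−1)/xmin) · (x/xmin)^(−α)`. -/
noncomputable def powerLawMeasure (α xmin : ℝ) : Measure ℝ :=
  volume.withDensity fun x =>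
    ENNReal.ofReal (if xmin ≤ x then ((α - 1) / xmin) * (x / xmin) ^ (-α) else 0)

/-- The maximum likelihood estimator `α̂_n = 1 + n · (Σ_{i=1}^n ln(X_i/xmin))⁻¹`. -/
noncomputable def mleExponent {Ω : Type*} (X : ℕ → Ω → ℝ) (xmin : ℝ) (n : ℕ) (ω : Ω) : ℝ :=
  1 + n / (∑ i ∈ Finset.range n, Real.log (X i ω / xmin))

section Aux
open Set Topology
open scoped ENNReal NNReal


/-- generic antiderivative: H x = -(x/xmin)^(1-α) * (a L² + b L + c), L = log(x/xmin). -/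
lemma plaw_hasDerivAt {α xmin : ℝ} (hα : 1 < α) (hxmin : 0 < xmin) (a b c : ℝ)
    {x : ℝ} (hx : xmin < x) :
    HasDerivAt (fun y => -((y/xmin)^(1-α)) *
        (a * (Real.log (y/xmin))^2 + b * Real.log (y/xmin) + c))
      (((α-1)/xmin) * (x/xmin)^(-α) *
          (a * (Real.log (x/xmin))^2 + b * Real.log (x/xmin) + c)
        - ((x/xmin)^(-α)/xmin) * (2*a*Real.log (x/xmin) + b)) x := by
  have hx0 : 0 < x := hxmin.trans hx
  have ht0 : 0 < x / xmin := div_pos hx0 hxmin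
  have h1 : HasDerivAt (fun y : ℝ => y / xmin) (1/xmin) x := by
    simpa using (hasDerivAt_id x).div_const xmin
  have h2 : HasDerivAt (fun y : ℝ => (y/xmin)^(1-α))
      ((1-α) * (x/xmin)^(1-α-1) * (1/xmin)) x :=
    by have := (Real.hasDerivAt_rpow_const (p := 1-α) (Or.inl ht0.ne')).comp x h1; exact this
  have h3 : HasDerivAt (fun y : ℝ => Real.log (y/xmin)) ((x/xmin)⁻¹ * (1/xmin)) x :=
    by have := (Real.hasDerivAt_log ht0.ne').comp x h1; exact this
  have h4 : HasDerivAt (fun y : ℝ =>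
      a * (Real.log (y/xmin))^2 + b * Real.log (y/xmin) + c)
      (a * (2 * Real.log (x/xmin) * ((x/xmin)⁻¹ * (1/xmin)))
        + b * ((x/xmin)⁻¹ * (1/xmin)) + 0) x := by
    exact (((h3.pow 2).const_mul a).add (h3.const_mul b)).add (hasDerivAt_const x c) |>.congr_deriv (by ring)
  have h5 := (h2.neg.mul h4)
  refine h5.congr_deriv ?_
  simp only [Pi.neg_apply]
  have e1 : (x/xmin)^(1-α-1) = (x/xmin)^(-α) := by norm_num
  have e2 : (x/xmin)^(1-α) = (x/xmin) * (x/xmin)^(-α) := by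
    rw [show (1-α) = 1 + (-α) by ring, Real.rpow_add ht0, Real.rpow_one]
  rw [e1, e2]
  have hxne : x ≠ 0 := hx0.ne'
  have hxm : xmin ≠ 0 := hxmin.ne'
  field_simp
  ring


lemma plaw_tendsto {α xmin : ℝ} (hα : 1 < α) (hxmin : 0 < xmin) (a b c : ℝ) :
    Tendsto (fun y => -((y/xmin)^(1-α)) *
        (a * (Real.log (y/xmin))^2 + b * Real.log (y/xmin) + c))
      atTop (𝓝 0) := by
  have hβ : 0 < α - 1 := by linarith
  -- base : t^(1-α) * (a (log t)^2 + b log t + c) → 0 as t → ∞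
  have base : Tendsto (fun t : ℝ => -(t^(1-α)) * (a * (Real.log t)^2 + b * Real.log t + c))
      atTop (𝓝 0) := by
    have h0 : Tendsto (fun t : ℝ => t^(-(α-1))) atTop (𝓝 0) := tendsto_rpow_neg_atTop hβ
    have h0' : Tendsto (fun t : ℝ => t^(1-α)) atTop (𝓝 0) := by
      simpa [show -(α-1) = 1-α by ring] using h0
    have h1 : Tendsto (fun t : ℝ => Real.log t * t^(1-α)) atTop (𝓝 0) := by
      have := (isLittleO_log_rpow_atTop hβ).tendsto_div_nhds_zero
      refine this.congr' ?_
      filter_upwards [eventually_gt_atTop (0:ℝ)] with t ht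
      rw [div_eq_mul_inv, ← Real.rpow_neg ht.le, show -(α-1) = 1-α by ring]
    have h2 : Tendsto (fun t : ℝ => (Real.log t)^2 * t^(1-α)) atTop (𝓝 0) := by
      have := (isLittleO_log_rpow_rpow_atTop 2 hβ).tendsto_div_nhds_zero
      refine this.congr' ?_
      filter_upwards [eventually_gt_atTop (1:ℝ)] with t ht
      have hl : 0 ≤ Real.log t := Real.log_nonneg ht.le
      rw [div_eq_mul_inv, ← Real.rpow_neg (le_trans zero_le_one ht.le),
        show -(α-1) = 1-α by ring, show ((2:ℝ)) = ((2:ℕ):ℝ) from by norm_num, Real.rpow_natCast]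
    have : Tendsto (fun t : ℝ =>
        -(a * ((Real.log t)^2 * t^(1-α)) + b * (Real.log t * t^(1-α)) + c * t^(1-α)))
        atTop (𝓝 (-(a*0 + b*0 + c*0))) :=
      (((h2.const_mul a).add (h1.const_mul b)).add (h0'.const_mul c)).neg
    simp only [mul_zero, add_zero, neg_zero] at this
    exact this.congr (by intro t; ring)
  have ht : Tendsto (fun y : ℝ => y / xmin) atTop atTop :=
    tendsto_id.atTop_div_const hxmin
  exact base.comp ht

lemma plaw_contWithinAt {α xmin : ℝ} (hxmin : 0 < xmin) (a b c : ℝ) :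
    ContinuousWithinAt (fun y => -((y/xmin)^(1-α)) *
        (a * (Real.log (y/xmin))^2 + b * Real.log (y/xmin) + c)) (Ici xmin) xmin := by
  have ht : xmin / xmin = 1 := div_self hxmin.ne'
  have h1 : ContinuousAt (fun y:ℝ => y/xmin) xmin := continuousAt_id.div_const _
  have h2 : ContinuousAt (fun y:ℝ => (y/xmin)^(1-α)) xmin := by
    have := ContinuousAt.comp (f := fun y:ℝ => y/xmin) (g := fun t:ℝ => t^(1-α))
      (Real.continuousAt_rpow_const (xmin/xmin) (1-α) (Or.inl (by rw [ht]; norm_num))) h1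
    exact this
  have h3 : ContinuousAt (fun y:ℝ => Real.log (y/xmin)) xmin := by
    have := ContinuousAt.comp (f := fun y:ℝ => y/xmin) (g := Real.log)
      (Real.continuousAt_log (x := xmin/xmin) (by rw [ht]; norm_num)) h1
    exact this
  exact (h2.neg.mul ((((h3.pow 2).const_mul a).add (h3.const_mul b)).add continuousAt_const)).continuousWithinAt

lemma plaw_nonneg {α xmin : ℝ} (hα : 1 < α) (hxmin : 0 < xmin) {x : ℝ} (hx : x ∈ Ioi xmin)
    (k : ℕ) : 0 ≤ ((α-1)/xmin) * (x/xmin)^(-α) * (Real.log (x/xmin))^k := by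
  have hL : 0 ≤ Real.log (x/xmin) := Real.log_nonneg ((one_le_div hxmin).2 hx.out.le)
  have hx0 : 0 < x := hxmin.trans hx.out
  have hA : 0 ≤ (x/xmin)^(-α) := Real.rpow_nonneg (div_nonneg hx0.le hxmin.le) _
  have h0 : (0:ℝ) ≤ (α-1)/xmin := div_nonneg (by linarith) hxmin.le
  exact mul_nonneg (mul_nonneg h0 hA) (pow_nonneg hL k)

lemma plaw_integral_log {α xmin : ℝ} (hα : 1 < α) (hxmin : 0 < xmin) :
    ∫ x in Ioi xmin, ((α-1)/xmin) * (x/xmin)^(-α) * Real.log (x/xmin) = 1/(α-1) := by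
  have hβ : (α:ℝ) - 1 ≠ 0 := by intro h; nlinarith
  have hderiv : ∀ x ∈ Ioi xmin, HasDerivAt (fun y => -((y/xmin)^(1-α)) *
      (0 * (Real.log (y/xmin))^2 + 1 * Real.log (y/xmin) + 1/(α-1)))
      (((α-1)/xmin) * (x/xmin)^(-α) * Real.log (x/xmin)) x := by
    intro x hx
    refine (plaw_hasDerivAt hα hxmin 0 1 (1/(α-1)) hx.out).congr_deriv ?_
    field_simp
    ring
  have := integral_Ioi_of_hasDerivAt_of_nonneg (plaw_contWithinAt hxmin 0 1 (1/(α-1)))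
    hderiv (fun x hx => by simpa using plaw_nonneg hα hxmin hx 1)
    (plaw_tendsto hα hxmin 0 1 (1/(α-1)))
  rw [this]
  simp [div_self hxmin.ne', Real.log_one]

lemma plaw_integrableOn_log_sq {α xmin : ℝ} (hα : 1 < α) (hxmin : 0 < xmin) :
    IntegrableOn (fun x => ((α-1)/xmin) * (x/xmin)^(-α) * (Real.log (x/xmin))^2)
      (Ioi xmin) := by
  have hβ : (α:ℝ) - 1 ≠ 0 := by intro h; nlinarith
  have hderiv : ∀ x ∈ Ioi xmin, HasDerivAt (fun y => -((y/xmin)^(1-α)) *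
      (1 * (Real.log (y/xmin))^2 + 2/(α-1) * Real.log (y/xmin) + 2/(α-1)^2))
      (((α-1)/xmin) * (x/xmin)^(-α) * (Real.log (x/xmin))^2) x := by
    intro x hx
    refine (plaw_hasDerivAt hα hxmin 1 (2/(α-1)) (2/(α-1)^2) hx.out).congr_deriv ?_
    field_simp
    ring
  exact integrableOn_Ioi_deriv_of_nonneg (plaw_contWithinAt hxmin 1 (2/(α-1)) (2/(α-1)^2))
    hderiv (fun x hx => plaw_nonneg hα hxmin hx 2)
    (plaw_tendsto hα hxmin 1 (2/(α-1)) (2/(α-1)^2))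

section
variable {α xmin : ℝ}

lemma plaw_d_meas (α xmin : ℝ) :
    Measurable fun x : ℝ => (if xmin ≤ x then ((α - 1) / xmin) * (x / xmin) ^ (-α) else 0).toNNReal := by
  apply Measurable.real_toNNReal
  exact Measurable.ite measurableSet_Ici
    (((measurable_id.div_const xmin).pow measurable_const).const_mul _) measurable_const

lemma plaw_smul_eq (hα : 1 < α) (hxmin : 0 < xmin) (g : ℝ → ℝ) (x : ℝ) :
    (if xmin ≤ x then ((α - 1) / xmin) * (x / xmin) ^ (-α) else 0).toNNReal • g x
      = Set.indicator (Ici xmin) (fun x => ((α-1)/xmin) * (x/xmin)^(-α) * g x) x := by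
  rw [NNReal.smul_def]
  by_cases h : xmin ≤ x
  · have hnn : 0 ≤ ((α - 1) / xmin) * (x / xmin) ^ (-α) :=
      mul_nonneg (div_nonneg (by linarith) hxmin.le)
        (Real.rpow_nonneg (div_nonneg (hxmin.le.trans h) hxmin.le) _)
    have hx : x ∈ Ici xmin := h
    rw [if_pos h, Set.indicator_of_mem hx, Real.coe_toNNReal _ hnn, smul_eq_mul]
  · have hx : x ∉ Ici xmin := h
    rw [if_neg h, Set.indicator_of_notMem hx]
    simp

lemma plaw_integral_eq (hα : 1 < α) (hxmin : 0 < xmin) (g : ℝ → ℝ) :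
    ∫ x, g x ∂(powerLawMeasure α xmin)
      = ∫ x in Ioi xmin, ((α-1)/xmin) * (x/xmin)^(-α) * g x := by
  rw [powerLawMeasure]
  rw [show (fun x : ℝ => ENNReal.ofReal (if xmin ≤ x then ((α - 1) / xmin) * (x / xmin) ^ (-α) else 0))
      = fun x : ℝ => ((if xmin ≤ x then ((α - 1) / xmin) * (x / xmin) ^ (-α) else 0).toNNReal : ℝ≥0∞) from rfl]
  rw [integral_withDensity_eq_integral_smul (plaw_d_meas α xmin) g]
  rw [integral_congr_ae (Eventually.of_forall (plaw_smul_eq hα hxmin g))]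
  rw [integral_indicator measurableSet_Ici, integral_Ici_eq_integral_Ioi]

lemma plaw_integrable_iff (hα : 1 < α) (hxmin : 0 < xmin) (g : ℝ → ℝ) :
    Integrable g (powerLawMeasure α xmin)
      ↔ IntegrableOn (fun x => ((α-1)/xmin) * (x/xmin)^(-α) * g x) (Ici xmin) := by
  rw [powerLawMeasure]
  rw [show (fun x : ℝ => ENNReal.ofReal (if xmin ≤ x then ((α - 1) / xmin) * (x / xmin) ^ (-α) else 0))
      = fun x : ℝ => ((if xmin ≤ x then ((α - 1) / xmin) * (x / xmin) ^ (-α) else 0).toNNReal : ℝ≥0∞) from rfl]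
  rw [integrable_withDensity_iff_integrable_smul (plaw_d_meas α xmin)]
  rw [integrable_congr (Eventually.of_forall (plaw_smul_eq hα hxmin g))]
  rw [integrable_indicator_iff measurableSet_Ici]

lemma plaw_memℒp (hα : 1 < α) (hxmin : 0 < xmin) :
    MemLp (fun x => Real.log (x/xmin)) 2 (powerLawMeasure α xmin) := by
  have hm : Measurable fun x : ℝ => Real.log (x/xmin) :=
    Real.measurable_log.comp (measurable_id.div_const _)
  rw [memLp_two_iff_integrable_sq hm.aestronglyMeasurable]
  rw [plaw_integrable_iff hα hxmin]
  exact (integrableOn_Ici_iff_integrableOn_Ioi).2 (plaw_integrableOn_log_sq hα hxmin)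

lemma plaw_mean (hα : 1 < α) (hxmin : 0 < xmin) :
    ∫ x, Real.log (x/xmin) ∂(powerLawMeasure α xmin) = 1/(α-1) := by
  rw [plaw_integral_eq hα hxmin, plaw_integral_log hα hxmin]
end


end Aux

section Main
open Topology

theorem stmt2 {Ω : Type*} [MeasurableSpace Ω] (μ : Measure Ω) [IsProbabilityMeasure μ]
    (α xmin : ℝ) (hα : 1 < α) (hxmin : 0 < xmin)
    (X : ℕ → Ω → ℝ) (hmeas : ∀ i, Measurable (X i))
    (hindep : iIndepFun X μ)
    (hdist : ∀ i, Measure.map (X i) μ = powerLawMeasure α xmin) :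
    ∀ ε : ℝ, 0 < ε → ∃ C : ℝ, 0 < C ∧ ∃ N : ℕ, ∀ n ≥ N,
      μ {ω | |mleExponent X xmin n ω - α| > C / Real.sqrt n} < ENNReal.ofReal ε := by
  intro ε hε
  have hβ : (0:ℝ) < α - 1 := by linarith
  set f : ℝ → ℝ := fun x => Real.log (x / xmin) with hf_def
  have hf : Measurable f := Real.measurable_log.comp (measurable_id.div_const _)
  set Y : ℕ → Ω → ℝ := fun i ω => f (X i ω) with hY_def
  have hYmeas : ∀ i, Measurable (Y i) := fun i => hf.comp (hmeas i)
  have hmap : ∀ i, Measure.map (Y i) μ = Measure.map f (powerLawMeasure α xmin) := fun i => by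
    show Measure.map (f ∘ X i) μ = _
    rw [← Measure.map_map hf (hmeas i), hdist i]
  have hident : ∀ i, IdentDistrib (Y i) (Y 0) μ μ := fun i =>
    ⟨(hYmeas i).aemeasurable, (hYmeas 0).aemeasurable, by rw [hmap i, hmap 0]⟩
  have hmem : ∀ i, MemLp (Y i) 2 μ := fun i => by
    have h := plaw_memℒp hα hxmin
    rw [← hdist i] at h
    exact (memLp_map_measure_iff hf.aestronglyMeasurable (hmeas i).aemeasurable).1 h
  have hmean : ∀ i, μ[Y i] = 1/(α-1) := fun i => by
    have h1 : ∫ x, f x ∂(Measure.map (X i) μ) = 1/(α-1) := by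
      rw [hdist i]; exact plaw_mean hα hxmin
    rw [integral_map (hmeas i).aemeasurable hf.aestronglyMeasurable] at h1
    exact h1
  set v : ℝ := variance (Y 0) μ with hv_def
  have hv0 : 0 ≤ v := variance_nonneg _ _
  set c : ℝ := Real.sqrt (v/ε) + 1 with hc_def
  have hc : 0 < c := by positivity
  have hcv : v / c^2 < ε := by
    have h1 : v/ε ≤ (Real.sqrt (v/ε))^2 := by
      rw [Real.sq_sqrt (div_nonneg hv0 hε.le)]
    have h2 : v/ε + 1 ≤ c^2 := by nlinarith [Real.sqrt_nonneg (v/ε)]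
    rw [div_lt_iff₀ (by positivity)]
    have h3 := mul_le_mul_of_nonneg_left h2 hε.le
    have h4 : ε * (v/ε) = v := by field_simp
    rw [mul_add, h4, mul_one] at h3
    linarith
  refine ⟨2*c*(α-1)^2 + 1, by positivity, ⌈(2*c*(α-1))^2⌉₊ + 1, fun n hn => ?_⟩
  set C : ℝ := 2*c*(α-1)^2 + 1 with hC_def
  have hn1 : 1 ≤ n := le_trans (Nat.le_add_left 1 _) hn
  have hn1' : (1:ℝ) ≤ n := by exact_mod_cast hn1
  have hnpos : (0:ℝ) < n := by linarith
  set q : ℝ := Real.sqrt n with hq_def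
  have hq0 : 0 < q := Real.sqrt_pos.2 hnpos
  have hqq : q * q = n := Real.mul_self_sqrt hnpos.le
  have hsge : 2*c*(α-1) ≤ q := by
    rw [hq_def, Real.le_sqrt (by positivity) hnpos.le]
    calc (2*c*(α-1))^2 ≤ (⌈(2*c*(α-1))^2⌉₊ : ℝ) := Nat.le_ceil _
    _ ≤ n := by exact_mod_cast Nat.le_of_succ_le hn
  set S : Ω → ℝ := fun ω => ∑ i ∈ range n, Y i ω with hS_def
  have hSmem : MemLp S 2 μ := memLp_finset_sum (range n) (fun i _ => hmem i)
  have hSint : ∀ i ∈ range n, Integrable (Y i) μ := fun i _ => (hmem i).integrable one_le_two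
  have hSmean : μ[S] = n * (1/(α-1)) := by
    rw [hS_def, integral_finset_sum _ hSint]
    simp [hmean, card_range]
  have hpair : Set.Pairwise ↑(range n) fun i j => IndepFun (Y i) (Y j) μ :=
    fun i _ j _ hij => (hindep.indepFun hij).comp hf hf
  have hSvar : variance S μ = n * v := by
    have hsum : S = ∑ i ∈ range n, Y i := by
      funext ω; rw [hS_def]; simp [Finset.sum_apply]
    rw [hsum, IndepFun.variance_sum (fun i _ => hmem i) hpair]
    have : ∀ i ∈ range n, variance (Y i) μ = v := fun i _ => (hident i).variance_eq
    rw [Finset.sum_congr rfl this, Finset.sum_const, card_range, nsmul_eq_mul]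
  have cheb := meas_ge_le_variance_div_sq (μ := μ) hSmem (c := c * q) (by positivity)
  have hval : variance S μ / (c * q)^2 = v / c^2 := by
    rw [hSvar, mul_pow]
    rw [show q^2 = (n:ℝ) by rw [sq, hqq]]
    field_simp
  rw [hval] at cheb
  have hsub : {ω | |mleExponent X xmin n ω - α| > C / q} ⊆ {ω | c * q ≤ |S ω - μ[S]|} := by
    intro ω hω
    simp only [Set.mem_setOf_eq] at hω ⊢
    by_contra hcon
    push_neg at hcon
    rw [hSmean] at hcon
    have habs : |S ω - n * (1/(α-1))| < c * q := hcon
    have hd := abs_lt.1 habs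
    have hcle : c ≤ q / (2*(α-1)) := by
      rw [le_div_iff₀ (by positivity)]; linarith
    have hnm2 : c * q ≤ (n * (1/(α-1)))/2 := by
      calc c * q ≤ (q / (2*(α-1))) * q := mul_le_mul_of_nonneg_right hcle hq0.le
      _ = (n * (1/(α-1)))/2 := by rw [← hqq]; field_simp
    have hS1 : (n * (1/(α-1)))/2 < S ω := by linarith
    have hSpos : 0 < S ω := by
      have : (0:ℝ) < (n * (1/(α-1)))/2 := by positivity
      linarith
    have hme : mleExponent X xmin n ω = 1 + n / S ω := rfl
    have key : mleExponent X xmin n ω - α = ((α-1) * (n * (1/(α-1)) - S ω)) / S ω := by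
      rw [hme]; field_simp; ring
    have habs2 : |mleExponent X xmin n ω - α|
        = (α-1) * |n * (1/(α-1)) - S ω| / S ω := by
      rw [key, abs_div, abs_of_pos hSpos, abs_mul, abs_of_pos hβ]
    have hA : |n * (1/(α-1)) - S ω| < c * q := by
      rw [abs_sub_comm]; exact habs
    have hA0 : 0 ≤ |n * (1/(α-1)) - S ω| := abs_nonneg _
    have hfin : (α-1) * |n * (1/(α-1)) - S ω| / S ω < C / q := by
      rw [div_lt_div_iff₀ hSpos hq0]
      have e1 : (α-1) * |n * (1/(α-1)) - S ω| * q < (α-1) * (c*q) * q := by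
        have := mul_lt_mul_of_pos_right (mul_lt_mul_of_pos_left hA hβ) hq0
        linarith
      have e2 : (α-1) * (c*q) * q = (α-1) * c * (n:ℝ) := by
        rw [← hqq]; ring
      have e3 : C * ((n * (1/(α-1)))/2) ≤ C * S ω :=
        mul_le_mul_of_nonneg_left hS1.le (by positivity)
      have e4 : (α-1) * c * (n:ℝ) < C * ((n * (1/(α-1)))/2) := by
        rw [hC_def]
        have h5 : (2*c*(α-1)^2 + 1) * ((n * (1/(α-1)))/2)
            = c*(α-1)*(n:ℝ) + n/(2*(α-1)) := by field_simp
        rw [h5]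
        have : 0 < (n:ℝ)/(2*(α-1)) := by positivity
        linarith
      calc (α-1) * |↑n * (1/(α-1)) - S ω| * q
          < (α-1) * (c*q) * q := e1
        _ = (α-1) * c * (n:ℝ) := e2
        _ < C * ((↑n * (1/(α-1)))/2) := e4
        _ ≤ C * S ω := e3
    rw [habs2] at hω
    linarith
  calc μ {ω | |mleExponent X xmin n ω - α| > C / q}
      ≤ μ {ω | c * q ≤ |S ω - μ[S]|} := measure_mono hsub
    _ ≤ ENNReal.ofReal (v / c^2) := cheb
    _ < ENNReal.ofReal ε := (ENNReal.ofReal_lt_ofReal_iff hε).2 hcv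

end Main
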